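/- For a standard normal random variable X, the central conditional variance Var[X | x < X < -x] = 1 + 2xφ(x)/(1 - 2Φ(x)) is strictly decreasing as a function of x on (-∞, 0). -/

import Mathlib

open MeasureTheory Real

/-- Standard normal density. -/
noncomputable def stdPdf (x : ℝ) : ℝ := (Real.sqrt (2 * Real.pi))⁻¹ * Real.exp (-x ^ 2 / 2)

/-- Standard normal distribution function. -/
noncomputable def stdCdf (x : ℝ) : ℝ := ∫ t in Set.Iic x, stdPdf t

lemma stdPdf_eq_gaussian : stdPdf = ProbabilityTheory.gaussianPDFReal 0 1 := by
  funext x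
  simp [stdPdf, ProbabilityTheory.gaussianPDFReal, neg_div]

lemma stdPdf_pos (x : ℝ) : 0 < stdPdf x := by
  rw [stdPdf_eq_gaussian]
  exact ProbabilityTheory.gaussianPDFReal_pos 0 1 x one_ne_zero

lemma continuous_stdPdf : Continuous stdPdf := by
  unfold stdPdf
  fun_prop

lemma integrable_stdPdf : Integrable stdPdf := by
  rw [stdPdf_eq_gaussian]
  exact ProbabilityTheory.integrable_gaussianPDFReal 0 1

lemma integral_stdPdf : ∫ x, stdPdf x = 1 := by
  rw [stdPdf_eq_gaussian]
  exact ProbabilityTheory.integral_gaussianPDFReal_eq_one 0 one_ne_zero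

lemma stdPdf_even (x : ℝ) : stdPdf (-x) = stdPdf x := by
  simp [stdPdf, neg_pow]

lemma stdCdf_zero : stdCdf 0 = 1 / 2 := by
  have h1 : stdCdf 0 + ∫ x in Set.Ioi (0:ℝ), stdPdf x = 1 := by
    rw [stdCdf, intervalIntegral.integral_Iic_add_Ioi integrable_stdPdf.integrableOn
      integrable_stdPdf.integrableOn, integral_stdPdf]
  have h2 : stdCdf 0 = ∫ x in Set.Ioi (0:ℝ), stdPdf x := by
    rw [stdCdf]
    have : (∫ t in Set.Iic (0:ℝ), stdPdf t) = ∫ t in Set.Iic (0:ℝ), stdPdf (-t) := by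
      simp [stdPdf_even]
    rw [this, integral_comp_neg_Iic, neg_zero]
  linarith

lemma hasDerivAt_stdCdf (x : ℝ) : HasDerivAt stdCdf (stdPdf x) x := by
  have key : ∀ y, stdCdf y = stdCdf 0 + ∫ t in (0:ℝ)..y, stdPdf t := by
    intro y
    rw [← intervalIntegral.integral_Iic_sub_Iic integrable_stdPdf.integrableOn
      integrable_stdPdf.integrableOn]
    simp [stdCdf]
  have h : HasDerivAt (fun y => stdCdf 0 + ∫ t in (0:ℝ)..y, stdPdf t) (stdPdf x) x := by
    refine HasDerivAt.const_add _ ?_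
    exact intervalIntegral.integral_hasDerivAt_right
      (continuous_stdPdf.intervalIntegrable 0 x)
      continuous_stdPdf.stronglyMeasurable.stronglyMeasurableAtFilter
      continuous_stdPdf.continuousAt
  have heq : stdCdf = fun y => stdCdf 0 + ∫ t in (0:ℝ)..y, stdPdf t := funext key
  rw [heq]
  exact h

lemma stdCdf_lt_half {x : ℝ} (hx : x < 0) : stdCdf x < 1 / 2 := by
  rw [← stdCdf_zero]
  have : stdCdf 0 - stdCdf x = ∫ t in x..0, stdPdf t := by
    rw [stdCdf, stdCdf]
    exact intervalIntegral.integral_Iic_sub_Iic integrable_stdPdf.integrableOn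
      integrable_stdPdf.integrableOn
  have hpos : 0 < ∫ t in x..0, stdPdf t :=
    intervalIntegral.intervalIntegral_pos_of_pos
      (continuous_stdPdf.intervalIntegrable x 0) (fun t => stdPdf_pos t) hx
  linarith

lemma hasDerivAt_stdPdf (x : ℝ) : HasDerivAt stdPdf (-x * stdPdf x) x := by
  unfold stdPdf
  have h1 : HasDerivAt (fun y : ℝ => -y ^ 2 / 2) (-x) x := by
    have : HasDerivAt (fun y : ℝ => -y ^ 2 / 2) (-(2 * x ^ 1) / 2) x := by
      exact (((hasDerivAt_pow 2 x).neg).div_const 2)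
    convert this using 1
    ring
  have h2 : HasDerivAt (fun y : ℝ => Real.exp (-y ^ 2 / 2))
      (Real.exp (-x ^ 2 / 2) * (-x)) x := (Real.hasDerivAt_exp _).comp x h1
  have := h2.const_mul (Real.sqrt (2 * Real.pi))⁻¹
  refine this.congr_deriv ?_
  ring

/-- The auxiliary function `u(x) = (1 - x²)(1 - 2Φ(x)) + 2xφ(x)` and its negativity on `Iio 0`. -/
lemma aux_neg {x : ℝ} (hx : x < 0) :
    (1 - x ^ 2) * (1 - 2 * stdCdf x) + 2 * x * stdPdf x < 0 := by
  set u : ℝ → ℝ := fun y => (1 - y ^ 2) * (1 - 2 * stdCdf y) + 2 * y * stdPdf y with hu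
  have hderiv : ∀ y : ℝ, HasDerivAt u (-2 * y * (1 - 2 * stdCdf y)) y := by
    intro y
    have h1 : HasDerivAt (fun z : ℝ => (1 - z ^ 2) * (1 - 2 * stdCdf z))
        ((-(2 * y ^ 1)) * (1 - 2 * stdCdf y) + (1 - y ^ 2) * (-(2 * stdPdf y))) y := by
      exact (((hasDerivAt_pow 2 y).const_sub 1)).mul
        (((hasDerivAt_stdCdf y).const_mul 2).const_sub 1)
    have h2 : HasDerivAt (fun z : ℝ => 2 * z * stdPdf z)
        (2 * stdPdf y + 2 * y * (-y * stdPdf y)) y := by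
      have := ((hasDerivAt_id y).const_mul 2).mul (hasDerivAt_stdPdf y)
      simpa [mul_comm, mul_assoc, mul_left_comm, Pi.mul_def] using this
    have := h1.add h2
    refine this.congr_deriv ?_
    ring
  have hmono : StrictMonoOn u (Set.Iic 0) := by
    apply strictMonoOn_of_deriv_pos (convex_Iic 0)
    · exact fun y _ => (hderiv y).differentiableAt.continuousAt.continuousWithinAt
    · intro y hy
      rw [interior_Iic] at hy
      rw [(hderiv y).deriv]
      have h1 : 0 < 1 - 2 * stdCdf y := by have := stdCdf_lt_half hy; linarith
      have h2 : (0:ℝ) < -2 * y * (1 - 2 * stdCdf y) := by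
        apply mul_pos _ h1
        have := Set.mem_Iio.1 hy
        linarith
      exact h2
  have h0 : u 0 = 0 := by simp [hu, stdCdf_zero]
  have := hmono (Set.mem_Iic.2 hx.le) (Set.mem_Iic.2 le_rfl) hx
  rw [h0] at this
  exact this

/-- The central conditional variance `Var[X | x < X < -x] = 1 + 2xφ(x)/(1 - 2Φ(x))` of a
standard normal is strictly decreasing on `(-∞, 0)`. -/
theorem stmt_4 :
    StrictAntiOn
      (fun x : ℝ => 1 + 2 * x * stdPdf x / (1 - 2 * stdCdf x))
      (Set.Iio 0) := by
  have hden : ∀ x ∈ Set.Iio (0:ℝ), 0 < 1 - 2 * stdCdf x := by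
    intro x hx
    have := stdCdf_lt_half hx
    linarith
  have hderiv : ∀ x ∈ Set.Iio (0:ℝ),
      HasDerivAt (fun x : ℝ => 1 + 2 * x * stdPdf x / (1 - 2 * stdCdf x))
        (2 * stdPdf x * ((1 - x ^ 2) * (1 - 2 * stdCdf x) + 2 * x * stdPdf x)
          / (1 - 2 * stdCdf x) ^ 2) x := by
    intro x hx
    have hne : (1 - 2 * stdCdf x) ≠ 0 := (hden x hx).ne'
    have hnum : HasDerivAt (fun y : ℝ => 2 * y * stdPdf y)
        (2 * stdPdf x + 2 * x * (-x * stdPdf x)) x := by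
      have := ((hasDerivAt_id x).const_mul 2).mul (hasDerivAt_stdPdf x)
      simpa [mul_comm, mul_assoc, mul_left_comm, Pi.mul_def] using this
    have hd : HasDerivAt (fun y : ℝ => 1 - 2 * stdCdf y) (-(2 * stdPdf x)) x :=
      ((hasDerivAt_stdCdf x).const_mul 2).const_sub 1
    have := (hnum.div hd hne).const_add 1
    refine this.congr_deriv ?_
    field_simp
    ring
  apply strictAntiOn_of_deriv_neg (convex_Iio 0)
  · intro x hx
    exact (hderiv x hx).differentiableAt.continuousAt.continuousWithinAt
  · intro x hx
    rw [interior_Iio] at hx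
    rw [(hderiv x hx).deriv]
    apply div_neg_of_neg_of_pos
    · have h1 := aux_neg hx
      have h2 := stdPdf_pos x
      nlinarith
    · exact pow_pos (hden x hx) 2
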